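/- Let Γ be a distance-regular graph with vertex set X and diameter D ≥ 1 that is formally self-dual with respect to an ordering {E_i}_{i=0}^D of the primitive idempotents of its Bose–Mesner algebra M. Let f, τ_0, …, τ_D be nonzero complex scalars with τ_0 = 1; set W = f Σ_{i=0}^D τ_i E_i and, for each vertex x ∈ X, W*(x) = f Σ_{i=0}^D τ_i E*_i(x). Assume that for every x ∈ X and every irreducible T(x)-module U: (i) U is thin; (ii) the endpoint of U equals the dual endpoint of U; (iii) the restrictions of A_1 and A*_1(x) to U form a spin Leonard pair on U, and the restrictions of W and W*(x) to U form a balanced Boltzmann pair for this Leonard pair; and (iv) f^{−2} = |X|^{−3/2} Σ_{i=0}^D 𝗄_i τ_i, where 𝗄_i = p^0_{ii} is the number of vertices at distance i from any fixed vertex. Then W is a spin model. -/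

import Mathlib

noncomputable section

open Finset Matrix

/-- The `i`-th distance matrix of a graph `G`. -/
def distMat {X : Type*} [Fintype X] (G : SimpleGraph X) (i : ℕ) : Matrix X X ℂ :=
  Matrix.of fun y z => if G.dist y z = i then 1 else 0

/-- `G` is a distance-regular graph of diameter `D`, with intersection numbers `p`:
`G` is connected, all distances are at most `D`, distance `D` is attained, and for
vertices `y, z` at distance `h`, the number of vertices at distance `i` from `y`
and `j` from `z` equals `p h i j`. -/
def IsDRG {X : Type*} [Fintype X] (G : SimpleGraph X) (D : ℕ) (p : ℕ → ℕ → ℕ → ℕ) : Prop :=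
  G.Connected ∧ (∀ y z : X, G.dist y z ≤ D) ∧ (∃ y z : X, G.dist y z = D) ∧
  ∀ (h i j : ℕ) (y z : X), G.dist y z = h →
    (Finset.univ.filter fun w => G.dist y w = i ∧ G.dist z w = j).card = p h i j

/-- The Bose–Mesner algebra of `G`, as the span of the distance matrices. -/
def BM {X : Type*} [Fintype X] (G : SimpleGraph X) (D : ℕ) : Submodule ℂ (Matrix X X ℂ) :=
  Submodule.span ℂ (Set.range fun i : Fin (D + 1) => distMat G (i : ℕ))

/-- `E` is an ordering of the primitive idempotents of the Bose–Mesner algebra,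
with `E 0` the trivial idempotent `|X|⁻¹ J`. -/
def IsPrimIdemOrdering {X : Type*} [Fintype X] [DecidableEq X] (G : SimpleGraph X) (D : ℕ)
    (E : Fin (D + 1) → Matrix X X ℂ) : Prop :=
  (∀ i, E i ∈ BM G D) ∧
  E 0 = (Fintype.card X : ℂ)⁻¹ • Matrix.of (fun _ _ => (1 : ℂ)) ∧
  (∀ i j, E i * E j = if i = j then E i else 0) ∧
  (∑ i, E i = 1) ∧
  Submodule.span ℂ (Set.range E) = BM G D

/-- `G` is formally self-dual with respect to `E`: the change-of-basis matrices
`P` and `Q` coincide. -/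
def IsFSD {X : Type*} [Fintype X] (G : SimpleGraph X) (D : ℕ)
    (E : Fin (D + 1) → Matrix X X ℂ) : Prop :=
  ∃ P : Fin (D + 1) → Fin (D + 1) → ℂ,
    (∀ j : Fin (D + 1), distMat G (j : ℕ) = ∑ i, P i j • E i) ∧
    (∀ j : Fin (D + 1), E j = (Fintype.card X : ℂ)⁻¹ • ∑ i, P i j • distMat G (i : ℕ))

/-- The dual idempotent `E*ᵢ(x)`. -/
def dualIdem {X : Type*} [Fintype X] [DecidableEq X] (G : SimpleGraph X) (x : X) (i : ℕ) :
    Matrix X X ℂ :=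
  Matrix.diagonal fun y => if G.dist x y = i then 1 else 0

/-- The dual distance matrix `A*ᵢ(x)`: diagonal with `(y,y)`-entry `|X| Eᵢ(x,y)`. -/
def dualDistMat {X : Type*} [Fintype X] [DecidableEq X] {D : ℕ}
    (E : Fin (D + 1) → Matrix X X ℂ) (x : X) (i : Fin (D + 1)) : Matrix X X ℂ :=
  Matrix.diagonal fun y => (Fintype.card X : ℂ) * E i x y

/-- The Terwilliger algebra `T(x)`, generated by the Bose–Mesner algebra together
with the dual idempotents. -/
def Terw {X : Type*} [Fintype X] [DecidableEq X] (G : SimpleGraph X) (D : ℕ) (x : X) :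
    Subalgebra ℂ (Matrix X X ℂ) :=
  Algebra.adjoin ℂ ((BM G D : Set (Matrix X X ℂ)) ∪
    Set.range fun i : Fin (D + 1) => dualIdem G x (i : ℕ))

/-- `U` is a `T(x)`-module. -/
def IsTMod {X : Type*} [Fintype X] [DecidableEq X] (G : SimpleGraph X) (D : ℕ) (x : X)
    (U : Submodule ℂ (X → ℂ)) : Prop :=
  ∀ B ∈ Terw G D x, ∀ v ∈ U, Matrix.mulVec B v ∈ U

/-- `U` is an irreducible `T(x)`-module. -/
def IsIrredTMod {X : Type*} [Fintype X] [DecidableEq X] (G : SimpleGraph X) (D : ℕ) (x : X)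
    (U : Submodule ℂ (X → ℂ)) : Prop :=
  IsTMod G D x U ∧ U ≠ ⊥ ∧ ∀ U' ≤ U, IsTMod G D x U' → U' = ⊥ ∨ U' = U

/-- `U` is thin: `dim E*ᵢ(x) U ≤ 1` for all `i`. -/
def IsThinMod {X : Type*} [Fintype X] [DecidableEq X] (G : SimpleGraph X) (D : ℕ) (x : X)
    (U : Submodule ℂ (X → ℂ)) : Prop :=
  ∀ i : Fin (D + 1),
    Module.finrank ℂ (U.map (Matrix.mulVecLin (dualIdem G x (i : ℕ)))) ≤ 1

/-- `r` is the endpoint of `U`: the minimal `i` with `E*ᵢ(x) U ≠ 0`. -/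
def HasEndpoint {X : Type*} [Fintype X] [DecidableEq X] (G : SimpleGraph X) (x : X)
    (U : Submodule ℂ (X → ℂ)) (r : ℕ) : Prop :=
  U.map (Matrix.mulVecLin (dualIdem G x r)) ≠ ⊥ ∧
  ∀ i < r, U.map (Matrix.mulVecLin (dualIdem G x i)) = ⊥

/-- `r` is the dual endpoint of `U`: the minimal `i` with `Eᵢ U ≠ 0`. -/
def HasDualEndpoint {X : Type*} [Fintype X] {D : ℕ} (E : Fin (D + 1) → Matrix X X ℂ)
    (U : Submodule ℂ (X → ℂ)) (r : Fin (D + 1)) : Prop :=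
  U.map (Matrix.mulVecLin (E r)) ≠ ⊥ ∧ ∀ i < r, U.map (Matrix.mulVecLin (E i)) = ⊥

/-- `d` is the diameter of the module `U`: `|{i : E*ᵢ(x) U ≠ 0}| = d + 1`. -/
def HasModDiameter {X : Type*} [Fintype X] [DecidableEq X] (G : SimpleGraph X) (D : ℕ)
    (x : X) (U : Submodule ℂ (X → ℂ)) (d : ℕ) : Prop :=
  {i : Fin (D + 1) | U.map (Matrix.mulVecLin (dualIdem G x (i : ℕ))) ≠ ⊥}.ncard = d + 1

/-- `W` is a type II matrix. -/
def IsTypeII {X : Type*} [Fintype X] [DecidableEq X] (W : Matrix X X ℂ) : Prop :=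
  W.IsSymm ∧ (∀ y z, W y z ≠ 0) ∧
  ∀ a b : X, (∑ y, W a y / W b y) = if a = b then (Fintype.card X : ℂ) else 0

/-- `W` is a spin model: type II and type III. -/
def IsSpinModel {X : Type*} [Fintype X] [DecidableEq X] (W : Matrix X X ℂ) : Prop :=
  IsTypeII W ∧ ∀ a b c : X,
    (∑ y, W a y * W b y / W c y) =
      (Real.sqrt (Fintype.card X) : ℂ) * W a b / (W a c * W b c)

/-- The Nomura algebra `N(W)` (as a set): symmetric matrices for which every
vector `u_{b,c}` is an eigenvector. -/
def NomuraSet {X : Type*} [Fintype X] (W : Matrix X X ℂ) : Set (Matrix X X ℂ) :=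
  {B | B.IsSymm ∧ ∀ b c : X, ∃ lam : ℂ,
    B.mulVec (fun y => W b y / W c y) = lam • (fun y => W b y / W c y)}

/-- A matrix is irreducible tridiagonal. -/
def IsIrredTridiag {n : ℕ} {F : Type*} [Field F] (M : Matrix (Fin n) (Fin n) F) : Prop :=
  (∀ i j : Fin n, ((i : ℕ) + 1 < (j : ℕ) ∨ (j : ℕ) + 1 < (i : ℕ)) → M i j = 0) ∧
  (∀ i j : Fin n, ((i : ℕ) + 1 = (j : ℕ) ∨ (j : ℕ) + 1 = (i : ℕ)) → M i j ≠ 0)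

/-- A Leonard pair on a space of dimension `d + 1`. -/
def IsLeonardPair {F V : Type*} [Field F] [AddCommGroup V] [Module F V]
    (d : ℕ) (A Astar : Module.End F V) : Prop :=
  (∃ b : Module.Basis (Fin (d + 1)) F V,
    IsIrredTridiag (LinearMap.toMatrix b b A) ∧ (LinearMap.toMatrix b b Astar).IsDiag) ∧
  (∃ b : Module.Basis (Fin (d + 1)) F V,
    IsIrredTridiag (LinearMap.toMatrix b b Astar) ∧ (LinearMap.toMatrix b b A).IsDiag)

/-- A Boltzmann pair for the Leonard pair `A, A*`. -/
def IsBoltzmannPair {F V : Type*} [Field F] [AddCommGroup V] [Module F V]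
    (A Astar W Wstar : Module.End F V) : Prop :=
  W ∈ Algebra.adjoin F {A} ∧ Wstar ∈ Algebra.adjoin F {Astar} ∧
  IsUnit W ∧ IsUnit Wstar ∧
  W * Astar * Ring.inverse W = Ring.inverse Wstar * A * Wstar

/-- `g : U → U` is the restriction of the matrix `B` to the invariant subspace `U`. -/
def RestrictsTo {X : Type*} [Fintype X] (B : Matrix X X ℂ) (U : Submodule ℂ (X → ℂ))
    (g : Module.End ℂ U) : Prop :=
  ∀ v : U, (g v : X → ℂ) = B.mulVec (v : X → ℂ)

namespace SpinModelAux

open Finset Matrix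

variable {X : Type*} [Fintype X] [DecidableEq X]

lemma perron_const {G : SimpleGraph X} (hconn : G.Connected) (kk : ℕ)
    (hreg : ∀ a : X, (Finset.univ.filter fun y => G.dist a y = 1).card = kk)
    (u : X → ℂ)
    (hu : ∀ a : X, (∑ y ∈ Finset.univ.filter (fun y => G.dist a y = 1), u y) = (kk : ℂ) * u a)
    (a b : X) : u a = u b := by
  haveI : Nonempty X := hconn.nonempty
  obtain ⟨y₀, -, hy₀⟩ := Finset.exists_max_image Finset.univ (fun y => ‖u y‖)
    ⟨a, Finset.mem_univ a⟩
  set m := ‖u y₀‖ with hm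
  have hmax : ∀ y, ‖u y‖ ≤ m := fun y => hy₀ y (Finset.mem_univ y)
  -- key step: at a vertex of maximal modulus, all neighbours have the same value
  have key : ∀ c : X, ‖u c‖ = m → ∀ y, G.dist c y = 1 → u y = u c := by
    intro c hc y hy
    by_cases hm0 : m = 0
    · have h1 : u y = 0 := by
        have := hmax y
        rw [hm0] at this
        exact norm_eq_zero.mp (le_antisymm this (norm_nonneg _))
      have h2 : u c = 0 := norm_eq_zero.mp (by rw [hc, hm0])
      rw [h1, h2]
    · set s := Finset.univ.filter (fun z => G.dist c z = 1) with hs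
      have hys : y ∈ s := by simp [hs, hy]
      have hle : ∀ z ∈ s, (u z * (starRingEnd ℂ) (u c)).re ≤ m ^ 2 := by
        intro z _
        calc (u z * (starRingEnd ℂ) (u c)).re ≤ ‖u z * (starRingEnd ℂ) (u c)‖ :=
              Complex.re_le_norm _
        _ = ‖u z‖ * ‖u c‖ := by
              rw [norm_mul, Complex.norm_conj]
        _ ≤ m * m := mul_le_mul (hmax z) (le_of_eq hc) (norm_nonneg _)
              (le_trans (norm_nonneg _) (hmax y₀))
        _ = m ^ 2 := (sq m).symm
      have hcc : u c * (starRingEnd ℂ) (u c) = ((m ^ 2 : ℝ) : ℂ) := by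
        rw [Complex.mul_conj]
        norm_cast
        rw [Complex.normSq_eq_norm_sq, hc]
      have hsum2 : (∑ z ∈ s, (u z * (starRingEnd ℂ) (u c)).re) = (kk : ℝ) * m ^ 2 := by
        have h1 : (∑ z ∈ s, u z * (starRingEnd ℂ) (u c)) = (kk : ℂ) * ((m ^ 2 : ℝ) : ℂ) := by
          rw [← Finset.sum_mul, hu c, mul_assoc, hcc]
        have h2 := congrArg Complex.re h1
        rw [Complex.re_sum] at h2
        rw [h2, ← Complex.ofReal_natCast, ← Complex.ofReal_mul, Complex.ofReal_re]
      have heach : ∀ z ∈ s, (u z * (starRingEnd ℂ) (u c)).re = m ^ 2 := by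
        have hconst : (∑ z ∈ s, (u z * (starRingEnd ℂ) (u c)).re) = ∑ z ∈ s, m ^ 2 := by
          rw [hsum2, Finset.sum_const, ← hreg c, hs]
          simp [nsmul_eq_mul]
        intro z hz
        by_contra hne
        have hlt : (u z * (starRingEnd ℂ) (u c)).re < m ^ 2 := lt_of_le_of_ne (hle z hz) hne
        have := Finset.sum_lt_sum (f := fun z => (u z * (starRingEnd ℂ) (u c)).re)
          (g := fun _ => m ^ 2) (fun i hi => hle i hi) ⟨z, hz, hlt⟩
        rw [hconst] at this
        exact lt_irrefl _ this
      -- equality in the triangle inequality forces u y = u c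
      have hre : (u y * (starRingEnd ℂ) (u c)).re = m ^ 2 := heach y hys
      have habs : ‖u y * (starRingEnd ℂ) (u c)‖ ≤ m ^ 2 := by
        rw [norm_mul, Complex.norm_conj, hc, sq]
        exact mul_le_mul_of_nonneg_right (hmax y) (le_trans (norm_nonneg _) (hmax y₀))
      have him : u y * (starRingEnd ℂ) (u c) = ((m ^ 2 : ℝ) : ℂ) := by
        set z := u y * (starRingEnd ℂ) (u c) with hz
        have h1 : ‖z‖ = z.re := le_antisymm (by rw [hre]; exact habs) (Complex.re_le_norm z)
        have h2 : z.im = 0 := by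
          have h4 := Complex.sq_norm z
          rw [Complex.normSq_apply, h1] at h4
          nlinarith [sq_nonneg z.im]
        apply Complex.ext <;>
          simp [hre, h2, ← Complex.ofReal_pow]
      have hcne : (starRingEnd ℂ) (u c) ≠ 0 := by
        simp only [ne_eq, map_eq_zero]
        intro h
        rw [h] at hc
        simp at hc
        exact hm0 hc.symm
      have : (u y - u c) * (starRingEnd ℂ) (u c) = 0 := by
        rw [sub_mul, him, hcc, sub_self]
      rcases mul_eq_zero.mp this with h | h
      · exact sub_eq_zero.mp h
      · exact absurd h hcne
  -- propagate along walks
  have walkprop : ∀ (c d : X) (w : G.Walk c d), u c = u y₀ → u d = u y₀ := by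
    intro c d w
    induction w with
    | nil => exact id
    | cons h q ih =>
      intro h1
      apply ih
      rw [← h1]
      apply key
      · rw [h1, ← hm]
      · exact SimpleGraph.dist_eq_one_iff_adj.mpr h
  have hall : ∀ c, u c = u y₀ := by
    intro c
    obtain ⟨w⟩ := hconn.preconnected y₀ c
    exact walkprop y₀ c w rfl
  rw [hall a, hall b]

lemma distMat_conjTranspose (G : SimpleGraph X) (i : ℕ) : (distMat G i)ᴴ = distMat G i := by
  ext a b
  simp only [conjTranspose_apply, distMat, Matrix.of_apply]
  rw [SimpleGraph.dist_comm]
  split <;> simp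

lemma bm_conjTranspose {G : SimpleGraph X} {D : ℕ} {B : Matrix X X ℂ} (hB : B ∈ BM G D) :
    Bᴴ ∈ BM G D := by
  rw [BM, Submodule.mem_span_range_iff_exists_fun] at hB ⊢
  obtain ⟨c, hc⟩ := hB
  refine ⟨fun i => (starRingEnd ℂ) (c i), ?_⟩
  rw [← hc, Matrix.conjTranspose_sum]
  refine Finset.sum_congr rfl fun i _ => ?_
  rw [Matrix.conjTranspose_smul, distMat_conjTranspose]
  rfl

lemma dualIdem_conjTranspose (G : SimpleGraph X) (x : X) (i : ℕ) :
    (dualIdem G x i)ᴴ = dualIdem G x i := by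
  ext a b
  simp only [dualIdem, conjTranspose_apply, Matrix.diagonal_apply]
  by_cases h : b = a
  · subst h
    simp only [if_pos rfl]
    split <;> simp
  · rw [if_neg h, if_neg (fun hh => h hh.symm)]
    simp

lemma terw_star {G : SimpleGraph X} {D : ℕ} {x : X} {B : Matrix X X ℂ}
    (hB : B ∈ Terw G D x) : Bᴴ ∈ Terw G D x := by
  induction hB using Algebra.adjoin_induction with
  | mem s hs =>
    rcases hs with hs | ⟨i, rfl⟩
    · exact Algebra.subset_adjoin (Or.inl (bm_conjTranspose hs))
    · rw [dualIdem_conjTranspose]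
      exact Algebra.subset_adjoin (Or.inr ⟨i, rfl⟩)
  | algebraMap r =>
    rw [Algebra.algebraMap_eq_smul_one, Matrix.conjTranspose_smul, Matrix.conjTranspose_one]
    exact Subalgebra.smul_mem _ (Subalgebra.one_mem _) _
  | add x y hx hy ihx ihy =>
    rw [Matrix.conjTranspose_add]; exact add_mem ihx ihy
  | mul x y hx hy ihx ihy =>
    rw [Matrix.conjTranspose_mul]; exact mul_mem ihy ihx

lemma exists_irred (G : SimpleGraph X) (D : ℕ) (x : X) (N : ℕ) :
    ∀ V : Submodule ℂ (X → ℂ), Module.finrank ℂ V ≤ N → IsTMod G D x V → V ≠ ⊥ →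
      ∃ U, U ≤ V ∧ IsIrredTMod G D x U := by
  induction N with
  | zero =>
    intro V h0 _ hbot
    exact absurd (Submodule.finrank_eq_zero.mp (le_antisymm h0 (Nat.zero_le _))) hbot
  | succ N ih =>
    intro V hV hmod hbot
    by_cases hirr : ∀ U' ≤ V, IsTMod G D x U' → U' = ⊥ ∨ U' = V
    · exact ⟨V, le_rfl, hmod, hbot, hirr⟩
    · push_neg at hirr
      obtain ⟨U', hle, hmod', h1, h2⟩ := hirr
      have hlt : U' < V := lt_of_le_of_ne hle h2
      have hrk : Module.finrank ℂ U' ≤ N := by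
        have := Submodule.finrank_lt_finrank_of_lt hlt
        omega
      obtain ⟨U, hU1, hU2⟩ := ih U' hrk hmod' h1
      exact ⟨U, hU1.trans hle, hU2⟩

lemma sSup_irred_eq_top (G : SimpleGraph X) (D : ℕ) (x : X) :
    sSup {U : Submodule ℂ (X → ℂ) | IsIrredTMod G D x U} = ⊤ := by
  set S := sSup {U : Submodule ℂ (X → ℂ) | IsIrredTMod G D x U} with hS
  have hinv : ∀ B ∈ Terw G D x, ∀ v ∈ S, B *ᵥ v ∈ S := by
    intro B hB v hv
    rw [hS, sSup_eq_iSup'] at hv ⊢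
    have hmem : B *ᵥ v ∈ Submodule.map (Matrix.mulVecLin B)
        (⨆ U : {U : Submodule ℂ (X → ℂ) // IsIrredTMod G D x U}, (U : Submodule ℂ (X → ℂ))) :=
      ⟨v, hv, by rw [Matrix.mulVecLin_apply]⟩
    rw [Submodule.map_iSup] at hmem
    have hle : (⨆ U : {U : Submodule ℂ (X → ℂ) // IsIrredTMod G D x U},
        Submodule.map (Matrix.mulVecLin B) (U : Submodule ℂ (X → ℂ))) ≤
        ⨆ U : {U : Submodule ℂ (X → ℂ) // IsIrredTMod G D x U}, (U : Submodule ℂ (X → ℂ)) := by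
      apply iSup_mono
      rintro ⟨U, hU⟩ w ⟨v', hv', rfl⟩
      exact hU.1 B hB v' hv'
    exact hle hmem
  by_contra hne
  let e := WithLp.linearEquiv 2 ℂ (X → ℂ)
  let S' : Submodule ℂ (EuclideanSpace ℂ X) := S.comap e.toLinearMap
  have hS'ne : S' ≠ ⊤ := by
    intro h
    apply hne
    rw [Submodule.eq_top_iff']
    intro v
    have := Submodule.eq_top_iff'.mp h (e.symm v)
    simpa [S', Submodule.mem_comap] using this
  have hbot : S'ᗮ ≠ ⊥ := fun h => hS'ne (Submodule.orthogonal_eq_bot_iff.mp h)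
  let V : Submodule ℂ (X → ℂ) := S'ᗮ.map e.toLinearMap
  have hVbot : V ≠ ⊥ := by
    intro h
    apply hbot
    rw [eq_bot_iff]
    intro w hw
    have hmem : e w ∈ V := ⟨w, hw, rfl⟩
    rw [h] at hmem
    have hz : e w = 0 := (Submodule.mem_bot ℂ).mp hmem
    have hw0 : w = 0 := by
      apply e.injective
      rw [hz, map_zero]
    simp [hw0]
  have hadj : ∀ (pp qq : EuclideanSpace ℂ X) (B : Matrix X X ℂ),
      (inner ℂ pp ((e.symm (B *ᵥ e qq)) : EuclideanSpace ℂ X) : ℂ) =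
        inner ℂ ((e.symm (Bᴴ *ᵥ e pp)) : EuclideanSpace ℂ X) qq := by
    intro pp qq B
    rw [PiLp.inner_apply, PiLp.inner_apply]
    simp only [RCLike.inner_apply]
    have h1 : ∀ y, ((e.symm (B *ᵥ e qq)) : EuclideanSpace ℂ X) y = (B *ᵥ (e qq : X → ℂ)) y :=
      fun _ => rfl
    have h2 : ∀ y, ((e.symm (Bᴴ *ᵥ e pp)) : EuclideanSpace ℂ X) y = (Bᴴ *ᵥ (e pp : X → ℂ)) y :=
      fun _ => rfl
    have h3 : ∀ (v : EuclideanSpace ℂ X) (y : X), e v y = v y := fun _ _ => rfl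
    simp only [h1, h2, h3, Matrix.mulVec, dotProduct, Matrix.conjTranspose_apply, map_sum,
      _root_.map_mul, Complex.star_def, Complex.conj_conj, Finset.sum_mul, Finset.mul_sum]
    rw [Finset.sum_comm]
    refine Finset.sum_congr rfl fun y _ => Finset.sum_congr rfl fun z _ => ?_
    ring
  have hVinv : IsTMod G D x V := by
    intro B hB v hv
    obtain ⟨w, hw, rfl⟩ := hv
    have hmem : e.symm (B *ᵥ e w) ∈ S'ᗮ := by
      rw [Submodule.mem_orthogonal]
      intro u' hu'
      rw [hadj]
      apply hw
      have : e (e.symm ((Bᴴ) *ᵥ e u')) ∈ S := by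
        simp only [LinearEquiv.apply_symm_apply]
        exact hinv _ (terw_star hB) _ hu'
      exact this
    exact ⟨e.symm (B *ᵥ e w), hmem, by simp⟩
  obtain ⟨U, hUV, hUirr⟩ := exists_irred G D x (Module.finrank ℂ V) V le_rfl hVinv hVbot
  obtain ⟨u₀, hu₀U, hu₀ne⟩ := Submodule.exists_mem_ne_zero_of_ne_bot hUirr.2.1
  have h1 : u₀ ∈ S := le_sSup (show U ∈ {U : Submodule ℂ (X → ℂ) | IsIrredTMod G D x U} from hUirr) hu₀U
  obtain ⟨w, hw, rfl⟩ := hUV hu₀U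
  have h2 : w ∈ S' := Submodule.mem_comap.mpr h1
  have h3 : w = 0 := by
    have := Submodule.orthogonal_disjoint S'
    rw [Submodule.disjoint_def] at this
    exact this w h2 hw
  apply hu₀ne
  rw [h3]
  simp

end SpinModelAux

set_option maxHeartbeats 1000000 in
set_option synthInstance.maxHeartbeats 400000 in
open SpinModelAux in
/-- from spin Leonard pairs on the irreducible Terwilliger modules
to a spin model. -/
theorem spin_model_from_spin_leonard_pairs {X : Type*} [Fintype X] [DecidableEq X]
    (G : SimpleGraph X) (D : ℕ) (hD : 1 ≤ D)
    (p : ℕ → ℕ → ℕ → ℕ) (hDRG : IsDRG G D p)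
    (E : Fin (D + 1) → Matrix X X ℂ) (hE : IsPrimIdemOrdering G D E)
    (hFSD : IsFSD G D E)
    (f : ℂ) (τ : Fin (D + 1) → ℂ)
    (hf : f ≠ 0) (hτ : ∀ i, τ i ≠ 0) (hτ0 : τ 0 = 1)
    (W : Matrix X X ℂ) (hW : W = f • ∑ i, τ i • E i)
    (Ws : X → Matrix X X ℂ)
    (hWs : ∀ x : X, Ws x = f • ∑ i, τ i • dualIdem G x (i : ℕ))
    (hmod : ∀ (x : X) (U : Submodule ℂ (X → ℂ)), IsIrredTMod G D x U →
      IsThinMod G D x U ∧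
      (∃ r : Fin (D + 1), HasEndpoint G x U (r : ℕ) ∧ HasDualEndpoint E U r) ∧
      (∃ AU AsU WU WsU : Module.End ℂ U,
        RestrictsTo (distMat G 1) U AU ∧
        RestrictsTo (dualDistMat E x 1) U AsU ∧
        RestrictsTo W U WU ∧
        RestrictsTo (Ws x) U WsU ∧
        (∃ n : ℕ, IsLeonardPair n AU AsU) ∧
        IsBoltzmannPair AU AsU WU WsU ∧
        WU * WsU * WU = WsU * WU * WsU))
    (hf2 : f ^ (-2 : ℤ) =
      (Real.sqrt (Fintype.card X) : ℂ) ^ (-3 : ℤ) * ∑ i : Fin (D + 1), (p 0 (i : ℕ) (i : ℕ) : ℂ) * τ i) :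
    IsSpinModel W := by
  classical
  obtain ⟨hconn, hdle, ⟨y₀, z₀, hyz⟩, hp⟩ := hDRG
  obtain ⟨P, hP1, hP2⟩ := hFSD
  obtain ⟨hEmem, hE0, hEorth, hEsum, hEspan⟩ := hE
  haveI : Nonempty X := hconn.nonempty
  set n : ℂ := (Fintype.card X : ℂ) with hn
  have hn0 : n ≠ 0 := Nat.cast_ne_zero.mpr Fintype.card_ne_zero
  -- the distance index
  set k : X → X → Fin (D + 1) := fun a b => ⟨G.dist a b, Nat.lt_succ_of_le (hdle a b)⟩ with hk
  have hkval : ∀ a b, (k a b : ℕ) = G.dist a b := fun a b => rfl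
  have hksymm : ∀ a b, k a b = k b a := by
    intro a b
    apply Fin.val_injective
    rw [hkval, hkval, SimpleGraph.dist_comm]
  have hkself : ∀ a, k a a = 0 := by
    intro a
    apply Fin.val_injective
    rw [hkval, SimpleGraph.dist_self]
    rfl
  have hdm : ∀ (i : ℕ) (a b : X), distMat G i a b = if G.dist a b = i then 1 else 0 :=
    fun _ _ _ => rfl
  -- summing an ite over the distance partition
  have hsumA : ∀ (g : Fin (D + 1) → ℂ) (a b : X),
      (∑ i : Fin (D + 1), g i * (if G.dist a b = (i : ℕ) then 1 else 0)) = g (k a b) := by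
    intro g a b
    rw [Finset.sum_eq_single (k a b)]
    · rw [if_pos (hkval a b).symm, mul_one]
    · intro i _ hne
      rw [if_neg, mul_zero]
      intro h
      exact hne (Fin.val_injective (by rw [hkval, h])).symm
    · intro h
      exact absurd (Finset.mem_univ _) h
  -- entries of E
  have hE_app : ∀ (j : Fin (D + 1)) (a b : X), E j a b = n⁻¹ * P (k a b) j := by
    intro j a b
    rw [hP2 j]
    simp only [Matrix.smul_apply, Matrix.sum_apply, smul_eq_mul]
    congr 1
    rw [← hsumA (fun i => P i j) a b]
    exact Finset.sum_congr rfl fun i _ => by rw [hdm]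
  set t : Fin (D + 1) → ℂ := fun i => n⁻¹ * ∑ j, P i j * τ j with htdef
  have hW_app : ∀ a b, W a b = f * t (k a b) := by
    intro a b
    rw [hW]
    simp only [Matrix.smul_apply, Matrix.sum_apply, smul_eq_mul]
    congr 1
    rw [htdef]
    simp only
    rw [Finset.mul_sum]
    rw [Finset.sum_congr rfl fun j (_ : j ∈ Finset.univ) => by rw [hE_app j a b]]
    exact Finset.sum_congr rfl fun j _ => by ring
  have hWsymm : ∀ a b, W a b = W b a := fun a b => by rw [hW_app, hW_app, hksymm]
  -- Ws is diagonal
  have hWs_app : ∀ c : X, Ws c = Matrix.diagonal (fun y => f * τ (k c y)) := by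
    intro c
    rw [hWs c]
    ext y z
    by_cases hyz' : y = z
    · subst hyz'
      rw [Matrix.diagonal_apply_eq]
      simp only [Matrix.smul_apply, Matrix.sum_apply, smul_eq_mul]
      congr 1
      rw [← hsumA τ c y]
      refine Finset.sum_congr rfl fun i _ => ?_
      rw [dualIdem, Matrix.diagonal_apply_eq]
    · rw [Matrix.diagonal_apply_ne _ hyz']
      simp only [Matrix.smul_apply, Matrix.sum_apply, smul_eq_mul]
      have hzz : ∀ i : Fin (D + 1), τ i * dualIdem G c (i : ℕ) y z = 0 := by
        intro i
        rw [dualIdem, Matrix.diagonal_apply_ne _ hyz', mul_zero]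
      rw [Finset.sum_congr rfl fun i _ => hzz i, Finset.sum_const_zero, mul_zero]
  -- row sums of distance matrices
  have hones : ∀ (j : ℕ) (a : X), (∑ y, distMat G j a y) = ((p 0 j j : ℕ) : ℂ) := by
    intro j a
    rw [Finset.sum_congr rfl fun y (_ : y ∈ Finset.univ) => hdm j a y]
    rw [Finset.sum_boole]
    rw [← hp 0 j j a a (SimpleGraph.dist_self)]
    congr 2
    ext y
    simp [and_self]
  -- sums of scalar-matrix combinations applied to vectors
  have hsmv : ∀ (M : Fin (D + 1) → Matrix X X ℂ) (c : Fin (D + 1) → ℂ) (v : X → ℂ),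
      (∑ i, c i • M i) *ᵥ v = ∑ i, c i • (M i *ᵥ v) := by
    intro M c v
    ext a
    simp only [Matrix.mulVec, dotProduct, Matrix.sum_apply, Matrix.smul_apply,
      Finset.sum_apply, Pi.smul_apply, smul_eq_mul, Finset.sum_mul]
    rw [Finset.sum_comm]
    refine Finset.sum_congr rfl fun i _ => ?_
    rw [Finset.mul_sum]
    exact Finset.sum_congr rfl fun x _ => by ring
  have hE0ones : E 0 *ᵥ (fun _ => (1 : ℂ)) = fun _ => 1 := by
    rw [hE0]
    ext a
    simp only [Matrix.mulVec, dotProduct, Matrix.smul_apply, Matrix.of_apply,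
      smul_eq_mul, mul_one, Finset.sum_const, nsmul_eq_mul, Finset.card_univ]
    rw [← hn]
    field_simp
  have hEones : ∀ i : Fin (D + 1), i ≠ 0 → E i *ᵥ (fun _ => (1 : ℂ)) = 0 := by
    intro i hi
    have h1 : E i *ᵥ (fun _ => (1 : ℂ)) = E i *ᵥ (E 0 *ᵥ fun _ => 1) := by rw [hE0ones]
    rw [h1, Matrix.mulVec_mulVec, hEorth i 0, if_neg hi, Matrix.zero_mulVec]
  have hP0 : ∀ j : Fin (D + 1), P 0 j = ((p 0 (j : ℕ) (j : ℕ) : ℕ) : ℂ) := by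
    intro j
    have h2 : distMat G (j : ℕ) *ᵥ (fun _ => (1 : ℂ)) = P 0 j • (fun _ => (1 : ℂ)) := by
      rw [hP1 j, hsmv]
      rw [Finset.sum_eq_single 0]
      · rw [hE0ones]
      · intro i _ hne
        rw [hEones i hne, smul_zero]
      · intro h
        exact absurd (Finset.mem_univ _) h
    have h3 := congrFun h2 (Classical.arbitrary X)
    simp only [Pi.smul_apply, smul_eq_mul, mul_one] at h3
    rw [← h3]
    show (distMat G (j:ℕ) *ᵥ fun _ => (1:ℂ)) (Classical.arbitrary X) = _
    simp only [Matrix.mulVec, dotProduct, mul_one]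
    exact hones _ _
  -- all distances are attained from every vertex
  have hstepdown : ∀ (i : ℕ) (w : X), G.dist y₀ w = i + 1 → ∃ w', G.dist y₀ w' = i := by
    intro i w hw
    have hrw : G.dist w y₀ = i + 1 := by rw [SimpleGraph.dist_comm]; exact hw
    obtain ⟨pw, hpw⟩ := (hconn.preconnected w y₀).exists_walk_length_eq_dist
    rw [hrw] at hpw
    have hne : w ≠ y₀ := by
      intro h
      rw [h, SimpleGraph.dist_self] at hrw
      omega
    obtain ⟨c, hadj, q, hq⟩ := SimpleGraph.Walk.exists_eq_cons_of_ne hne pw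
    have hql : q.length = i := by
      have hlen := congrArg SimpleGraph.Walk.length hq
      rw [hpw] at hlen
      simp only [SimpleGraph.Walk.length_cons] at hlen
      omega
    refine ⟨c, le_antisymm ?_ ?_⟩
    · have h1 := SimpleGraph.dist_le q.reverse
      rw [SimpleGraph.Walk.length_reverse, hql] at h1
      exact h1
    · have h2 : G.dist y₀ w ≤ G.dist y₀ c + G.dist c w := hconn.dist_triangle
      have h3 : G.dist c w ≤ 1 :=
        le_of_eq (SimpleGraph.dist_eq_one_iff_adj.mpr hadj.symm)
      omega
  have hatt_y0 : ∀ i : ℕ, i ≤ D → ∃ w, G.dist y₀ w = i := by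
    have main : ∀ m : ℕ, (∃ w, G.dist y₀ w = m) → ∀ i ≤ m, ∃ w', G.dist y₀ w' = i := by
      intro m
      induction m with
      | zero =>
        intro hw i hi
        interval_cases i
        exact ⟨y₀, SimpleGraph.dist_self⟩
      | succ m ih =>
        intro ⟨w, hw⟩ i hi
        rcases Nat.lt_or_ge i (m + 1) with h | h
        · exact ih (hstepdown m w hw) i (by omega)
        · have : i = m + 1 := by omega
          exact ⟨w, by rw [this]; exact hw⟩
    intro i hi
    exact main D ⟨z₀, hyz⟩ i hi
  have hkpos : ∀ i : ℕ, i ≤ D → 0 < p 0 i i := by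
    intro i hi
    obtain ⟨w, hw⟩ := hatt_y0 i hi
    rw [← hp 0 i i y₀ y₀ (SimpleGraph.dist_self)]
    exact Finset.card_pos.mpr ⟨w, by simp [hw]⟩
  have hatt : ∀ (c : X) (i : Fin (D + 1)), ∃ w, G.dist c w = (i : ℕ) := by
    intro c i
    have h1 := hp 0 (i : ℕ) (i : ℕ) c c (SimpleGraph.dist_self)
    have h2 : 0 < (Finset.univ.filter fun w => G.dist c w = (i : ℕ) ∧ G.dist c w = (i : ℕ)).card := by
      rw [h1]
      exact hkpos (i : ℕ) (Nat.lt_succ_iff.mp i.isLt)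
    obtain ⟨w, hw⟩ := Finset.card_pos.mp h2
    exact ⟨w, (Finset.mem_filter.mp hw).2.1⟩
  have hreg : ∀ a : X, (Finset.univ.filter fun y => G.dist a y = 1).card = p 0 1 1 := by
    intro a
    rw [← hp 0 1 1 a a (SimpleGraph.dist_self)]
    congr 1
    ext y
    simp [and_self]
  -- globalization of module identities
  have hzero : ∀ (c : X) (N : Matrix X X ℂ),
      (∀ U : Submodule ℂ (X → ℂ), IsIrredTMod G D c U → ∀ v ∈ U, N *ᵥ v = 0) → N = 0 := by
    intro c N hN
    have hker : sSup {U : Submodule ℂ (X → ℂ) | IsIrredTMod G D c U} ≤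
        LinearMap.ker (Matrix.mulVecLin N) := by
      apply sSup_le
      intro U hU v hv
      rw [LinearMap.mem_ker, Matrix.mulVecLin_apply]
      exact hN U hU v hv
    rw [sSup_irred_eq_top G D c, top_le_iff, LinearMap.ker_eq_top] at hker
    have hv : ∀ v, N *ᵥ v = 0 := by
      intro v
      rw [← Matrix.mulVecLin_apply, hker]
      rfl
    ext a b
    have := congrFun (hv (Pi.single b 1)) a
    rw [Matrix.mulVec_single] at this
    simpa using this
  have braid : ∀ c : X, W * Ws c * W = Ws c * W * Ws c := by
    intro c
    have h0 : W * Ws c * W - Ws c * W * Ws c = 0 := by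
      apply hzero c
      intro U hU v hv
      obtain ⟨-, -, AU, AsU, WU, WsU, hA, hAs, hWU, hWsU, -, hBP, hbal⟩ := hmod c U hU
      set vv : U := ⟨v, hv⟩ with hvv
      have h1 : (W * Ws c * W) *ᵥ v = ((WU * WsU * WU) vv : X → ℂ) := by
        rw [Module.End.mul_apply, Module.End.mul_apply, hWU, hWsU, hWU]
        rw [Matrix.mulVec_mulVec, Matrix.mulVec_mulVec]
      have h2 : (Ws c * W * Ws c) *ᵥ v = ((WsU * WU * WsU) vv : X → ℂ) := by
        rw [Module.End.mul_apply, Module.End.mul_apply, hWsU, hWU, hWsU]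
        rw [Matrix.mulVec_mulVec, Matrix.mulVec_mulVec]
      rw [Matrix.sub_mulVec, h1, h2, hbal, sub_self]
    exact sub_eq_zero.mp h0
  have intert : ∀ c : X, Ws c * W * dualDistMat E c 1 = distMat G 1 * (Ws c * W) := by
    intro c
    have h0 : Ws c * W * dualDistMat E c 1 - distMat G 1 * (Ws c * W) = 0 := by
      apply hzero c
      intro U hU v hv
      obtain ⟨-, -, AU, AsU, WU, WsU, hA, hAs, hWU, hWsU, -, hBP, hbal⟩ := hmod c U hU
      obtain ⟨-, -, hWUu, hWsUu, hconj⟩ := hBP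
      have hcomm : WsU * WU * AsU = AU * (WsU * WU) := by
        have e1 : WsU * (WU * AsU * Ring.inverse WU) * WU = WsU * WU * AsU := by
          simp only [mul_assoc]
          rw [Ring.inverse_mul_cancel _ hWUu, mul_one]
        have e2 : WsU * (Ring.inverse WsU * AU * WsU) * WU = AU * (WsU * WU) := by
          simp only [← mul_assoc]
          rw [Ring.mul_inverse_cancel _ hWsUu, one_mul, mul_assoc]
        rw [← e1, hconj, e2]
      set vv : U := ⟨v, hv⟩ with hvv
      have h1 : (Ws c * W * dualDistMat E c 1) *ᵥ v = ((WsU * WU * AsU) vv : X → ℂ) := by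
        rw [Module.End.mul_apply, Module.End.mul_apply, hWsU, hWU, hAs]
        rw [Matrix.mulVec_mulVec, Matrix.mulVec_mulVec]
      have h2 : (distMat G 1 * (Ws c * W)) *ᵥ v = ((AU * (WsU * WU)) vv : X → ℂ) := by
        rw [Module.End.mul_apply, Module.End.mul_apply, hA, hWsU, hWU]
        rw [Matrix.mulVec_mulVec, Matrix.mulVec_mulVec, ← mul_assoc]
      rw [Matrix.sub_mulVec, h1, h2, hcomm, sub_self]
    exact sub_eq_zero.mp h0
  -- entry version of the braid relation
  have hstar : ∀ c a b : X, (∑ y, W a y * W b y * τ (k c y)) =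
      f * (τ (k c a) * τ (k c b) * W a b) := by
    intro c a b
    have h := congrFun (congrFun (braid c) a) b
    rw [hWs_app] at h
    have hL : (W * Matrix.diagonal (fun y => f * τ (k c y)) * W) a b =
        f * ∑ y, W a y * W b y * τ (k c y) := by
      rw [Matrix.mul_apply, Finset.mul_sum]
      refine Finset.sum_congr rfl fun y _ => ?_
      rw [Matrix.mul_diagonal, ← hWsymm b y]
      ring
    have hR : (Matrix.diagonal (fun y => f * τ (k c y)) * W *
        Matrix.diagonal (fun y => f * τ (k c y))) a b =
        f * (f * (τ (k c a) * τ (k c b) * W a b)) := by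
      rw [Matrix.mul_diagonal, Matrix.diagonal_mul]
      ring
    rw [hL, hR] at h
    exact mul_left_cancel₀ hf h
  -- the function y ↦ τ (k c y) * W y c is constant
  have hUc : ∀ c y : X, τ (k c y) * W y c = f * t 0 := by
    intro c
    have hueig : ∀ a : X,
        (∑ y ∈ Finset.univ.filter (fun y => G.dist a y = 1), τ (k c y) * W y c) =
        ((p 0 1 1 : ℕ) : ℂ) * (τ (k c a) * W a c) := by
      intro a
      have h := congrFun (congrFun (intert c) a) c
      rw [hWs_app] at h
      have hdd : dualDistMat E c 1 = Matrix.diagonal (fun y => n * E 1 c y) := rfl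
      rw [hdd] at h
      have hL : (Matrix.diagonal (fun y => f * τ (k c y)) * W *
          Matrix.diagonal (fun y => n * E 1 c y)) a c =
          (f * τ (k c a)) * W a c * (n * E 1 c c) := by
        rw [Matrix.mul_diagonal, Matrix.diagonal_mul]
      have hE1cc : n * E 1 c c = ((p 0 1 1 : ℕ) : ℂ) := by
        rw [hE_app, hkself]
        rw [← mul_assoc, mul_inv_cancel₀ hn0, one_mul]
        have hval1 : ((1 : Fin (D + 1)) : ℕ) = 1 := by rw [Fin.val_one']; exact Nat.mod_eq_of_lt (by omega)
        rw [hP0 1, hval1]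
      have hR : (distMat G 1 * (Matrix.diagonal (fun y => f * τ (k c y)) * W)) a c =
          f * ∑ y ∈ Finset.univ.filter (fun y => G.dist a y = 1), τ (k c y) * W y c := by
        rw [Matrix.mul_apply]
        rw [Finset.sum_filter]
        rw [Finset.mul_sum]
        refine Finset.sum_congr rfl fun y _ => ?_
        rw [Matrix.diagonal_mul, hdm]
        split <;> ring
      rw [hL, hE1cc, hR] at h
      have := h.symm
      rw [show (f * τ (k c a)) * W a c * ((p 0 1 1 : ℕ) : ℂ) =
        f * (((p 0 1 1 : ℕ) : ℂ) * (τ (k c a) * W a c)) by ring] at this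
      exact mul_left_cancel₀ hf this
    have hperron := perron_const hconn (p 0 1 1) hreg (fun y => τ (k c y) * W y c) hueig
    intro y
    have h1 : τ (k c y) * W y c = τ (k c c) * W c c := hperron y c
    rw [h1, hkself, hτ0, hW_app, hkself, one_mul]
  -- τ i * t i is constant
  set α : ℂ := t 0 with hα
  have hτt : ∀ i : Fin (D + 1), τ i * t i = α := by
    intro i
    obtain ⟨w, hw⟩ := hatt y₀ i
    have h1 := hUc y₀ w
    have hkw : k y₀ w = i := Fin.val_injective (by rw [hkval, hw])
    rw [hW_app, hksymm w y₀, hkw] at h1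
    apply mul_left_cancel₀ hf
    rw [← h1]
    ring
  -- normalization
  set sq : ℂ := ((Real.sqrt (Fintype.card X) : ℝ) : ℂ) with hsqdef
  have hsq2 : sq ^ 2 = n := by
    rw [hsqdef, hn, ← Complex.ofReal_pow, Real.sq_sqrt (Nat.cast_nonneg _)]
    norm_cast
  have hsqne : sq ≠ 0 := by
    intro h
    rw [h, pow_two, mul_zero] at hsq2
    exact hn0 hsq2.symm
  have ht0 : n * α = ∑ j, P 0 j * τ j := by
    rw [hα, htdef]
    simp only
    rw [← mul_assoc, mul_inv_cancel₀ hn0, one_mul]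
  have hnα : (∑ i : Fin (D + 1), ((p 0 (i : ℕ) (i : ℕ) : ℕ) : ℂ) * τ i) = n * α := by
    rw [ht0]
    exact Finset.sum_congr rfl fun j _ => by rw [hP0 j]
  have hkey : f ^ 2 * α = sq := by
    have h := hf2
    rw [hnα] at h
    have ha : f ^ (-2 : ℤ) = (f ^ 2)⁻¹ := by
      rw [_root_.zpow_neg]
      norm_cast
    have hb : sq ^ (-3 : ℤ) = (sq ^ 3)⁻¹ := by
      rw [_root_.zpow_neg]
      norm_cast
    rw [ha, hb] at h
    have hf2ne : f ^ 2 ≠ 0 := pow_ne_zero _ hf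
    have hsq3ne : sq ^ 3 ≠ 0 := pow_ne_zero _ hsqne
    have h2 : sq ^ 3 = f ^ 2 * (n * α) := by
      field_simp at h
      linear_combination h
    have h3 : (f ^ 2 * α) * sq ^ 2 = sq * sq ^ 2 := by
      linear_combination f ^ 2 * α * hsq2 - h2
    exact mul_right_cancel₀ (pow_ne_zero 2 hsqne) h3
  have hαne : α ≠ 0 := by
    intro h0
    rw [h0, mul_zero] at hkey
    exact hsqne hkey.symm
  have htα : ∀ i, t i = α / τ i := by
    intro i
    rw [eq_div_iff (hτ i), mul_comm]
    exact hτt i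
  have htne : ∀ i, t i ≠ 0 := fun i => by
    rw [htα i]
    exact div_ne_zero hαne (hτ i)
  have hWne : ∀ a b, W a b ≠ 0 := fun a b => by
    rw [hW_app]
    exact mul_ne_zero hf (htne _)
  -- the key product identity  W * S = (f * n * α) • 1
  have hWS : W * (∑ j, τ j • distMat G (j : ℕ)) = (f * n * α) • (1 : Matrix X X ℂ) := by
    have hEA : ∀ (kk j : Fin (D + 1)), E kk * distMat G (j : ℕ) = P kk j • E kk := by
      intro kk j
      rw [hP1 j, Finset.mul_sum]
      rw [Finset.sum_eq_single kk]
      · rw [Matrix.mul_smul, hEorth kk kk, if_pos rfl]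
      · intro i _ hne
        rw [Matrix.mul_smul, hEorth kk i, if_neg (fun hh => hne hh.symm), smul_zero]
      · intro hk
        exact absurd (Finset.mem_univ _) hk
    rw [hW, Matrix.smul_mul, Finset.sum_mul]
    have hrow : ∀ i : Fin (D + 1),
        (τ i • E i) * (∑ j, τ j • distMat G (j : ℕ)) = (n * α) • E i := by
      intro i
      rw [Finset.mul_sum]
      have hterm : ∀ j : Fin (D + 1),
          (τ i • E i) * (τ j • distMat G (j : ℕ)) = (τ i * (P i j * τ j)) • E i := by
        intro j
        rw [Matrix.smul_mul, Matrix.mul_smul, hEA i j, smul_smul, smul_smul]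
        congr 1
        ring
      rw [Finset.sum_congr rfl fun j _ => hterm j]
      have hcollect : (∑ j, (τ i * (P i j * τ j)) • E i) = (τ i * ∑ j, P i j * τ j) • E i := by
        rw [← Finset.sum_smul, ← Finset.mul_sum]
      rw [hcollect]
      have h2 : (∑ j, P i j * τ j) = n * t i := by
        rw [htdef]
        simp only
        rw [← mul_assoc, mul_inv_cancel₀ hn0, one_mul]
      rw [h2]
      congr 1
      calc τ i * (n * t i) = n * (τ i * t i) := by ring
      _ = n * α := by rw [hτt i]
    rw [Finset.sum_congr rfl fun i _ => hrow i, ← Finset.smul_sum, hEsum, smul_smul, mul_assoc]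
  have hSapp : ∀ y b : X, (∑ j, τ j • distMat G (j : ℕ)) y b = τ (k b y) := by
    intro y b
    rw [Matrix.sum_apply]
    have hterm : ∀ j : Fin (D + 1), (τ j • distMat G (j : ℕ)) y b =
        τ j * (if G.dist y b = (j : ℕ) then 1 else 0) := by
      intro j
      rw [Matrix.smul_apply, smul_eq_mul, hdm]
    rw [Finset.sum_congr rfl fun j _ => hterm j, hsumA τ y b, hksymm]
  have typeII : ∀ a b : X, (∑ y, W a y / W b y) = if a = b then n else 0 := by
    intro a b
    have h1 : ∀ y, W a y / W b y = (W a y * τ (k b y)) * (f * α)⁻¹ := by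
      intro y
      rw [hW_app b y, htα (k b y)]
      have hτy := hτ (k b y)
      field_simp
    rw [Finset.sum_congr rfl fun y _ => h1 y, ← Finset.sum_mul]
    have h2 : (∑ y, W a y * τ (k b y)) = (W * (∑ j, τ j • distMat G (j : ℕ))) a b := by
      rw [Matrix.mul_apply]
      exact Finset.sum_congr rfl fun y _ => by rw [hSapp y b]
    rw [h2, hWS, Matrix.smul_apply, Matrix.one_apply]
    by_cases hab : a = b
    · rw [if_pos hab, if_pos hab, smul_eq_mul, mul_one]
      field_simp
    · rw [if_neg hab, if_neg hab, smul_eq_mul, mul_zero, zero_mul]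
  have hτgen : ∀ u v : X, τ (k u v) = f * α / W v u := by
    intro u v
    rw [hW_app v u, hksymm v u, htα (k u v)]
    have hτy := hτ (k u v)
    field_simp
  constructor
  · refine ⟨?_, fun y z => hWne y z, typeII⟩
    show Wᵀ = W
    ext a b
    rw [Matrix.transpose_apply]
    exact hWsymm b a
  · intro a b c
    have h1 : ∀ y, W a y * W b y / W c y = (W a y * W b y * τ (k c y)) * (f * α)⁻¹ := by
      intro y
      rw [hW_app c y, htα (k c y)]
      have hτy := hτ (k c y)
      field_simp
    rw [Finset.sum_congr rfl fun y _ => h1 y, ← Finset.sum_mul, hstar c a b]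
    rw [hτgen c a, hτgen c b, ← hsqdef, ← hkey]
    have hac := hWne a c
    have hbc := hWne b c
    field_simp
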